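/- Let G = (V,E) be a k-sparse locally finite graph and q : V → [0,∞). Set d := inf_{x∈V}(deg(x)+q(x)) and D := sup_{x∈V}(deg(x)+q(x)), and assume k ≤ d ≤ D < ∞. Then for every finitely supported f : V → ℂ, (d − 2·√((k/2)(d − k/2)))·‖f‖² ≤ Q_Δ(f) + Q_q(f) ≤ (D + 2·√((k/2)(D − k/2)))·‖f‖²; in particular these numbers bound the bottom and the top of the spectrum of Δ+q. -/

import Mathlib

open scoped BigOperators

noncomputable section

variable {V : Type*} [DecidableEq V] (G : SimpleGraph V) [DecidableRel G.Adj]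

/-- The squared `ℓ²`-norm `‖f‖² = ∑_x |f x|²` of a (finitely supported) function. -/
def qNormSq (f : V → ℂ) : ℝ := ∑' x, ‖f x‖ ^ 2

/-- The quadratic form of the Laplacian:
`Q_Δ(f) = (1/2) ∑_{x ~ y} |f x - f y|²` (sum over ordered pairs of adjacent vertices). -/
def qLap (f : V → ℂ) : ℝ :=
  (1 / 2) * ∑' (x : V), ∑' (y : V), if G.Adj x y then ‖f x - f y‖ ^ 2 else 0

/-- The magnetic quadratic form
`Q_θ(f) = (1/2) ∑_{x ~ y} |f x - e^{iθ(x,y)} f y|²`. -/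
def qMag (θ : V → V → ℝ) (f : V → ℂ) : ℝ :=
  (1 / 2) * ∑' (x : V), ∑' (y : V),
    if G.Adj x y then ‖f x - Complex.exp (Complex.I * (θ x y)) * f y‖ ^ 2 else 0

/-- The quadratic form of a potential: `Q_q(f) = ∑_x q x * |f x|²`. -/
def qPot (q : V → ℝ) (f : V → ℂ) : ℝ := ∑' x, q x * ‖f x‖ ^ 2

variable [G.LocallyFinite]

/-- The quadratic form of the degree: `Q_deg(f) = ∑_x deg x * |f x|²`. -/
def qDeg (f : V → ℂ) : ℝ := ∑' x, (G.degree x : ℝ) * ‖f x‖ ^ 2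

/-- Twice the number of undirected edges of the subgraph induced on `W`,
i.e. the number of ordered pairs of adjacent vertices in `W × W`. -/
def edgesTwice (W : Finset V) : ℕ := ((W ×ˢ W).filter fun p => G.Adj p.1 p.2).card

/-- The cardinality `|∂W|` of the edge boundary of `W`. -/
def bdryCard (W : Finset V) : ℕ :=
  ∑ x ∈ W, ((G.neighborFinset x).filter fun y => y ∉ W).card

/-- `(G, q)` is `(a,k)`-sparse: `2|E_W| ≤ k|W| + a(|∂W| + q₊(W))` for all finite `W`. -/
def IsSparse (q : V → ℝ) (a k : ℝ) : Prop :=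
  ∀ W : Finset V,
    (edgesTwice G W : ℝ) ≤ k * W.card + a * ((bdryCard G W : ℝ) + ∑ x ∈ W, max (q x) 0)

/-- The potential `q` belongs to the class `K_α`:
`Q_{q₋}(f) ≤ α (Q_Δ(f) + Q_{q₊}(f)) + C ‖f‖²` for all finitely supported `f`. -/
def KClass (q : V → ℝ) (α : ℝ) : Prop :=
  ∃ C : ℝ, 0 ≤ C ∧ ∀ f : V → ℂ, (Function.support f).Finite →
    qPot (fun x => max (-q x) 0) f ≤
      α * (qLap G f + qPot (fun x => max (q x) 0) f) + C * qNormSq f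

/-- The potential `q` belongs to the magnetic class `K_α^θ`:
`Q_{q₋}(f) ≤ α (Q_θ(f) + Q_{q₊}(f)) + C ‖f‖²` for all finitely supported `f`. -/
def KClassTheta (θ : V → V → ℝ) (q : V → ℝ) (α : ℝ) : Prop :=
  ∃ C : ℝ, 0 ≤ C ∧ ∀ f : V → ℂ, (Function.support f).Finite →
    qPot (fun x => max (-q x) 0) f ≤
      α * (qMag G θ f + qPot (fun x => max (q x) 0) f) + C * qNormSq f

/-- The Cheeger (isoperimetric) constant of `U ⊆ V`:
the infimum over nonempty finite `W ⊆ U` of `(|∂W| + q(W)) / (deg(W) + q(W))`,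
with the convention that the quotient is `0` when the denominator vanishes. -/
def cheeger (q : V → ℝ) (U : Set V) : ℝ :=
  ⨅ W : {W : Finset V // ↑W ⊆ U ∧ W.Nonempty},
    if (∑ x ∈ W.1, ((G.degree x : ℝ) + q x)) = 0 then 0
    else ((bdryCard G W.1 : ℝ) + ∑ x ∈ W.1, q x) / ∑ x ∈ W.1, ((G.degree x : ℝ) + q x)

/-- The Cheeger constant at infinity: `α_∞ = sup over finite K of α_{V∖K}`. -/
def cheegerInfty (q : V → ℝ) : ℝ :=
  ⨆ K : Finset V, cheeger G q ((↑K : Set V)ᶜ)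

lemma sparse_levelset (k : ℝ)
    (hsparse : ∀ W : Finset V, (edgesTwice G W : ℝ) ≤ k * W.card) :
    ∀ (n : ℕ) (g : V → ℝ), (∀ x, 0 ≤ g x) → ∀ W : Finset V,
      (∀ x, g x ≠ 0 → x ∈ W) → (W.filter fun x => g x ≠ 0).card ≤ n →
      ∑ p ∈ (W ×ˢ W).filter (fun p => G.Adj p.1 p.2), min (g p.1) (g p.2)
        ≤ k * ∑ x ∈ W, g x := by
  intro n
  induction n with
  | zero =>
    intro g hg W hsupp hcard
    have hgz : ∀ x, g x = 0 := by
      intro x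
      by_contra hx
      have hxW : x ∈ W.filter fun x => g x ≠ 0 := by
        simp [Finset.mem_filter, hsupp x hx, hx]
      have := Finset.card_pos.2 ⟨x, hxW⟩
      omega
    simp [hgz]
  | succ n ih =>
    intro g hg W hsupp hcard
    set W' : Finset V := W.filter fun x => g x ≠ 0 with hW'def
    by_cases hW' : W' = ∅
    · have hgz : ∀ x, g x = 0 := by
        intro x
        by_contra hx
        have hxW : x ∈ W' := by simp [hW'def, Finset.mem_filter, hsupp x hx, hx]
        simp [hW'] at hxW
      simp [hgz]
    · have hW'ne : W'.Nonempty := Finset.nonempty_iff_ne_empty.2 hW'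
      obtain ⟨x₀, hx₀W', hx₀min⟩ := W'.exists_min_image g hW'ne
      set m := g x₀ with hm
      have hmpos : 0 < m := by
        have : g x₀ ≠ 0 := (Finset.mem_filter.1 hx₀W').2
        exact lt_of_le_of_ne (hg x₀) (Ne.symm this)
      have hW'W : W' ⊆ W := Finset.filter_subset _ _
      have hmle : ∀ x ∈ W', m ≤ g x := hx₀min
      set g' : V → ℝ := fun x => if x ∈ W' then g x - m else 0 with hg'def
      have hg'nn : ∀ x, 0 ≤ g' x := by
        intro x
        simp only [hg'def]
        split
        · next h => linarith [hmle x h]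
        · exact le_refl 0
      have hg'supp : ∀ x, g' x ≠ 0 → x ∈ W := by
        intro x hx
        by_contra hxW
        have : x ∉ W' := fun h => hxW (hW'W h)
        simp [hg'def, this] at hx
      have hg'card : (W.filter fun x => g' x ≠ 0).card ≤ n := by
        have hsub : (W.filter fun x => g' x ≠ 0) ⊆ W'.erase x₀ := by
          intro x hx
          rw [Finset.mem_filter] at hx
          have hxW' : x ∈ W' := by
            by_contra h
            simp [hg'def, h] at hx
          refine Finset.mem_erase.2 ⟨?_, hxW'⟩
          intro hxx₀
          subst hxx₀
          simp [hg'def, hxW', hm] at hx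
        have h1 := Finset.card_le_card hsub
        have h2 := Finset.card_erase_of_mem hx₀W'
        omega
      have hIH := ih g' hg'nn W hg'supp hg'card
      -- termwise identity
      have hzeroW' : ∀ x ∈ W, x ∉ W' → g x = 0 := by
        intro x hxW hxW'
        by_contra h
        exact hxW' (Finset.mem_filter.2 ⟨hxW, h⟩)
      have hterm : ∀ p ∈ (W ×ˢ W).filter (fun p => G.Adj p.1 p.2),
          min (g p.1) (g p.2)
            = min (g' p.1) (g' p.2) + (if p.1 ∈ W' ∧ p.2 ∈ W' then m else 0) := by
        rintro ⟨x, y⟩ hp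
        rw [Finset.mem_filter, Finset.mem_product] at hp
        obtain ⟨⟨hxW, hyW⟩, -⟩ := hp
        by_cases hx : x ∈ W' <;> by_cases hy : y ∈ W'
        · simp only [hg'def, hx, hy, if_true, and_self]
          rcases le_total (g x) (g y) with h | h
          · rw [min_eq_left h, min_eq_left (by linarith)]; ring
          · rw [min_eq_right h, min_eq_right (by linarith)]; ring
        · have hgy := hzeroW' y hyW hy
          have h1 : g' y = 0 := by simp [hg'def, hy]
          rw [hgy, h1, min_eq_right (hg x), min_eq_right (hg'nn x)]
          simp [hy]
        · have hgx := hzeroW' x hxW hx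
          have h1 : g' x = 0 := by simp [hg'def, hx]
          rw [hgx, h1, min_eq_left (hg y), min_eq_left (hg'nn y)]
          simp [hx]
        · have hgx := hzeroW' x hxW hx
          have hgy := hzeroW' y hyW hy
          have h1 : g' x = 0 := by simp [hg'def, hx]
          have h2 : g' y = 0 := by simp [hg'def, hy]
          rw [hgx, hgy, h1, h2]
          simp [hx]
      have hsum1 : ∑ p ∈ (W ×ˢ W).filter (fun p => G.Adj p.1 p.2), min (g p.1) (g p.2)
          = (∑ p ∈ (W ×ˢ W).filter (fun p => G.Adj p.1 p.2), min (g' p.1) (g' p.2))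
            + m * (edgesTwice G W') := by
        rw [Finset.sum_congr rfl hterm, Finset.sum_add_distrib]
        congr 1
        have hset : ((W ×ˢ W).filter (fun p => G.Adj p.1 p.2)).filter
              (fun p => p.1 ∈ W' ∧ p.2 ∈ W')
            = (W' ×ˢ W').filter (fun p => G.Adj p.1 p.2) := by
          ext p
          simp only [Finset.mem_filter, Finset.mem_product]
          constructor
          · rintro ⟨⟨-, h⟩, h1, h2⟩; exact ⟨⟨h1, h2⟩, h⟩
          · rintro ⟨⟨h1, h2⟩, h⟩; exact ⟨⟨⟨hW'W h1, hW'W h2⟩, h⟩, h1, h2⟩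
        rw [← Finset.sum_filter, hset, Finset.sum_const, edgesTwice]
        simp [mul_comm]
      have hsum2 : ∑ x ∈ W, g x = (∑ x ∈ W, g' x) + m * W'.card := by
        have hterm2 : ∀ x ∈ W, g x = g' x + (if x ∈ W' then m else 0) := by
          intro x hxW
          by_cases hx : x ∈ W'
          · simp only [hg'def, hx, if_true]; ring
          · simp only [hg'def, hx, if_false]
            rw [hzeroW' x hxW hx]; ring
        rw [Finset.sum_congr rfl hterm2, Finset.sum_add_distrib]
        congr 1
        rw [← Finset.sum_filter, Finset.filter_mem_eq_inter, Finset.inter_eq_right.2 hW'W,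
          Finset.sum_const]
        simp [mul_comm]
      have hsp := hsparse W'
      have hsp' := mul_le_mul_of_nonneg_left hsp hmpos.le
      rw [hsum1, hsum2]
      linarith

-- swap symmetry of the pair set
lemma pair_swap_sum (U : Finset V) (h : V → ℝ) :
    ∑ p ∈ (U ×ˢ U).filter (fun p => G.Adj p.1 p.2), h p.2
      = ∑ p ∈ (U ×ˢ U).filter (fun p => G.Adj p.1 p.2), h p.1 := by
  refine Finset.sum_equiv (Equiv.prodComm V V) ?_ ?_
  · intro p
    simp only [Finset.mem_filter, Finset.mem_product, Equiv.prodComm_apply, Prod.fst_swap,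
      Prod.snd_swap]
    constructor
    · rintro ⟨⟨h1, h2⟩, h3⟩; exact ⟨⟨h2, h1⟩, h3.symm⟩
    · rintro ⟨⟨h1, h2⟩, h3⟩; exact ⟨⟨h2, h1⟩, h3.symm⟩
  · intro p _
    rfl


set_option maxHeartbeats 1000000 in
/-- for a `k`-sparse graph with `q ≥ 0`,
`d := inf (deg + q)`, `D := sup (deg + q)`, assuming `k ≤ d ≤ D < ∞`, one has
`(d - 2√((k/2)(d-k/2)))‖f‖² ≤ Q_Δ(f)+Q_q(f) ≤ (D + 2√((k/2)(D-k/2)))‖f‖²`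
for all finitely supported `f`. -/
theorem stmt1 [Countable V] [Nonempty V] (q : V → ℝ) (hq : ∀ x, 0 ≤ q x) (k : ℝ)
    (hsparse : ∀ W : Finset V, (edgesTwice G W : ℝ) ≤ k * W.card)
    (hbdd : BddAbove (Set.range fun x => (G.degree x : ℝ) + q x))
    (hkd : k ≤ ⨅ x, ((G.degree x : ℝ) + q x))
    (f : V → ℂ) (hf : (Function.support f).Finite) :
    ((⨅ x, ((G.degree x : ℝ) + q x)) -
        2 * Real.sqrt (k / 2 * ((⨅ x, ((G.degree x : ℝ) + q x)) - k / 2))) * qNormSq f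
      ≤ qLap G f + qPot q f ∧
    qLap G f + qPot q f ≤
      ((⨆ x, ((G.degree x : ℝ) + q x)) +
        2 * Real.sqrt (k / 2 * ((⨆ x, ((G.degree x : ℝ) + q x)) - k / 2))) * qNormSq f := by
  classical
  set d := ⨅ x, ((G.degree x : ℝ) + q x) with hd
  set D := ⨆ x, ((G.degree x : ℝ) + q x) with hD
  set T : Finset V := hf.toFinset with hT
  set U : Finset V := T ∪ T.biUnion (fun x => G.neighborFinset x) with hU
  have hTU : T ⊆ U := Finset.subset_union_left
  have hfT : ∀ x, x ∉ T → f x = 0 := by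
    intro x hx
    by_contra h
    exact hx (hT ▸ hf.mem_toFinset.2 h)
  have hnbr : ∀ x ∈ T, G.neighborFinset x ⊆ U := by
    intro x hx y hy
    exact Finset.mem_union_right _ (Finset.mem_biUnion.2 ⟨x, hx, hy⟩)
  have hadjU : ∀ x y, G.Adj x y → f y ≠ 0 → x ∈ U := by
    intro x y hxy hfy
    have hyT : y ∈ T := hT ▸ hf.mem_toFinset.2 hfy
    exact hnbr y hyT ((SimpleGraph.mem_neighborFinset G y x).2 hxy.symm)
  have hfU : ∀ x, x ∉ U → f x = 0 := fun x hx => hfT x (fun h => hx (hTU h))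
  set P := (U ×ˢ U).filter (fun p => G.Adj p.1 p.2) with hP
  -- tsum reductions
  have hN : qNormSq f = ∑ x ∈ U, ‖f x‖ ^ 2 := by
    refine tsum_eq_sum ?_
    intro x hx
    rw [hfU x hx]
    simp
  have hPot : qPot q f = ∑ x ∈ U, q x * ‖f x‖ ^ 2 := by
    refine tsum_eq_sum ?_
    intro x hx
    rw [hfU x hx]
    simp
  have hterm0 : ∀ x y : V, (x ∉ U ∨ y ∉ U) →
      (if G.Adj x y then ‖f x - f y‖ ^ 2 else 0) = 0 := by
    intro x y hxy
    by_cases hadj : G.Adj x y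
    · have hfx : f x = 0 := by
        rcases hxy with hx | hy
        · exact hfU x hx
        · by_contra h
          exact hy (hadjU y x hadj.symm h)
      have hfy : f y = 0 := by
        rcases hxy with hx | hy
        · by_contra h
          exact hx (hadjU x y hadj h)
        · exact hfU y hy
      simp [hadj, hfx, hfy]
    · simp [hadj]
  have hLap : qLap G f = (1 / 2) * ∑ x ∈ U, ∑ y ∈ U,
      (if G.Adj x y then ‖f x - f y‖ ^ 2 else 0) := by
    rw [qLap]
    congr 1
    rw [tsum_eq_sum (s := U) (f := fun x => ∑' y, if G.Adj x y then ‖f x - f y‖ ^ 2 else 0) ?_]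
    · exact Finset.sum_congr rfl fun x _ =>
        tsum_eq_sum fun y hy => hterm0 x y (Or.inr hy)
    · intro x hx
      exact (tsum_congr fun y => hterm0 x y (Or.inl hx)).trans tsum_zero
  -- double sum over pairs
  have hpair : ∀ h : V → V → ℝ,
      (∑ x ∈ U, ∑ y ∈ U, (if G.Adj x y then h x y else 0)) = ∑ p ∈ P, h p.1 p.2 := by
    intro h
    rw [hP, Finset.sum_filter, Finset.sum_product]
  -- degree identity for first coordinate
  have hcnt : ∀ x ∈ U, (((U.filter fun y => G.Adj x y).card : ℝ)) * ‖f x‖ ^ 2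
      = (G.degree x : ℝ) * ‖f x‖ ^ 2 := by
    intro x hx
    by_cases hfx : f x = 0
    · simp [hfx]
    · have hxT : x ∈ T := hT ▸ hf.mem_toFinset.2 hfx
      have : U.filter (fun y => G.Adj x y) = G.neighborFinset x := by
        ext y
        simp only [Finset.mem_filter, SimpleGraph.mem_neighborFinset]
        exact ⟨fun h => h.2, fun h => ⟨hnbr x hxT ((SimpleGraph.mem_neighborFinset G x y).2 h), h⟩⟩
      rw [this, SimpleGraph.card_neighborFinset_eq_degree]
  have hfst : ∑ p ∈ P, ‖f p.1‖ ^ 2 = ∑ x ∈ U, (G.degree x : ℝ) * ‖f x‖ ^ 2 := by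
    rw [← hpair (fun x _ => ‖f x‖ ^ 2)]
    refine Finset.sum_congr rfl fun x hx => ?_
    rw [← Finset.sum_filter, Finset.sum_const, nsmul_eq_mul]
    exact hcnt x hx
  have hsnd : ∑ p ∈ P, ‖f p.2‖ ^ 2 = ∑ x ∈ U, (G.degree x : ℝ) * ‖f x‖ ^ 2 := by
    rw [← hfst]
    exact pair_swap_sum G U (fun v => ‖f v‖ ^ 2)
  -- complex algebra
  have hcsq : ∀ a b : ℂ, ‖a - b‖ ^ 2
      = ‖a‖ ^ 2 + ‖b‖ ^ 2 - 2 * (a * (starRingEnd ℂ) b).re := by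
    intro a b
    simp only [← Complex.normSq_eq_norm_sq]
    exact Complex.normSq_sub a b
  -- decomposition
  have hQ : qLap G f + qPot q f
      = (∑ x ∈ U, ((G.degree x : ℝ) + q x) * ‖f x‖ ^ 2)
        - ∑ p ∈ P, (f p.1 * (starRingEnd ℂ) (f p.2)).re := by
    rw [hLap, hPot, hpair (fun x y => ‖f x - f y‖ ^ 2)]
    have e1 : ∑ p ∈ P, ‖f p.1 - f p.2‖ ^ 2
        = (∑ p ∈ P, ‖f p.1‖ ^ 2) + (∑ p ∈ P, ‖f p.2‖ ^ 2)
          - 2 * ∑ p ∈ P, (f p.1 * (starRingEnd ℂ) (f p.2)).re := by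
      rw [← Finset.sum_add_distrib, Finset.mul_sum, ← Finset.sum_sub_distrib]
      exact Finset.sum_congr rfl fun p _ => hcsq (f p.1) (f p.2)
    have e2 : ∑ x ∈ U, ((G.degree x : ℝ) + q x) * ‖f x‖ ^ 2
        = (∑ x ∈ U, (G.degree x : ℝ) * ‖f x‖ ^ 2) + ∑ x ∈ U, q x * ‖f x‖ ^ 2 := by
      rw [← Finset.sum_add_distrib]
      exact Finset.sum_congr rfl fun x _ => by ring
    rw [e1, hfst, hsnd, e2]
    ring
  rw [hQ, hN]
  set N := ∑ x ∈ U, ‖f x‖ ^ 2 with hNdef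
  set Qdeg := ∑ x ∈ U, (G.degree x : ℝ) * ‖f x‖ ^ 2 with hQdegdef
  set QD := ∑ x ∈ U, ((G.degree x : ℝ) + q x) * ‖f x‖ ^ 2 with hQDdef
  set B := ∑ p ∈ P, (f p.1 * (starRingEnd ℂ) (f p.2)).re with hBdef
  set S := ∑ p ∈ P, ‖f p.1‖ * ‖f p.2‖ with hSdef
  set M := ∑ p ∈ P, min (‖f p.1‖ ^ 2) (‖f p.2‖ ^ 2) with hMdef
  -- basic bounds
  have hNnn : 0 ≤ N := Finset.sum_nonneg fun x _ => by positivity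
  have hbelow : BddBelow (Set.range fun x => (G.degree x : ℝ) + q x) := by
    refine ⟨0, ?_⟩
    rintro y ⟨x, rfl⟩
    have := hq x
    positivity
  have hdle : ∀ x, d ≤ (G.degree x : ℝ) + q x := fun x => ciInf_le hbelow x
  have hleD : ∀ x, (G.degree x : ℝ) + q x ≤ D := fun x => le_ciSup hbdd x
  have hdD : d ≤ D := le_trans (hdle (Classical.arbitrary V)) (hleD (Classical.arbitrary V))
  have hQD_lb : d * N ≤ QD := by
    rw [hNdef, Finset.mul_sum]
    exact Finset.sum_le_sum fun x _ => mul_le_mul_of_nonneg_right (hdle x) (by positivity)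
  have hQD_ub : QD ≤ D * N := by
    rw [hNdef, Finset.mul_sum]
    exact Finset.sum_le_sum fun x _ => mul_le_mul_of_nonneg_right (hleD x) (by positivity)
  have hQdeg_le : Qdeg ≤ QD := by
    refine Finset.sum_le_sum fun x _ => ?_
    have h1 := hq x
    have h2 : (0:ℝ) ≤ ‖f x‖ ^ 2 := by positivity
    nlinarith
  have hBS : |B| ≤ S := by
    calc |B| ≤ ∑ p ∈ P, |(f p.1 * (starRingEnd ℂ) (f p.2)).re| :=
          Finset.abs_sum_le_sum_abs _ _
      _ ≤ S := by
          refine Finset.sum_le_sum fun p _ => ?_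
          calc |(f p.1 * (starRingEnd ℂ) (f p.2)).re|
              ≤ ‖f p.1 * (starRingEnd ℂ) (f p.2)‖ := Complex.abs_re_le_norm _
            _ = ‖f p.1‖ * ‖f p.2‖ := by
                rw [norm_mul, Complex.norm_conj]
  have hMkN : M ≤ k * N := by
    refine sparse_levelset G k hsparse ((U.filter fun x => ‖f x‖ ^ 2 ≠ 0).card)
      (fun x => ‖f x‖ ^ 2) (fun x => by positivity) U ?_ le_rfl
    intro x hx
    have hfx : f x ≠ 0 := by
      intro h
      apply hx
      simp [h]
    exact hTU (hT ▸ hf.mem_toFinset.2 hfx)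
  have hMnn : 0 ≤ M := Finset.sum_nonneg fun p _ => le_min (by positivity) (by positivity)
  -- the epsilon bound
  have hSbound : ∀ ε : ℝ, 0 < ε → ε ≤ 1 →
      S ≤ ε * Qdeg + (1 / (2 * ε) - ε / 2) * (k * N) := by
    intro ε hε hε1
    have key : ∀ a b : ℝ, 0 ≤ a → 0 ≤ b →
        a * b ≤ ε / 2 * (a ^ 2 + b ^ 2) + (1 / (2 * ε) - ε / 2) * min (a ^ 2) (b ^ 2) := by
      intro a b ha hb
      rcases le_total a b with hab | hab
      · rw [min_eq_left (by nlinarith)]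
        have expand : ε * (ε / 2 * (a ^ 2 + b ^ 2) + (1 / (2 * ε) - ε / 2) * a ^ 2)
            = ε ^ 2 / 2 * b ^ 2 + a ^ 2 / 2 := by
          field_simp
          ring
        have h2 : ε * (a * b) ≤ ε * (ε / 2 * (a ^ 2 + b ^ 2) + (1 / (2 * ε) - ε / 2) * a ^ 2) := by
          rw [expand]
          nlinarith [sq_nonneg (ε * b - a)]
        exact le_of_mul_le_mul_left h2 hε
      · rw [min_eq_right (by nlinarith)]
        have expand : ε * (ε / 2 * (a ^ 2 + b ^ 2) + (1 / (2 * ε) - ε / 2) * b ^ 2)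
            = ε ^ 2 / 2 * a ^ 2 + b ^ 2 / 2 := by
          field_simp
          ring
        have h2 : ε * (a * b) ≤ ε * (ε / 2 * (a ^ 2 + b ^ 2) + (1 / (2 * ε) - ε / 2) * b ^ 2) := by
          rw [expand]
          nlinarith [sq_nonneg (ε * a - b)]
        exact le_of_mul_le_mul_left h2 hε
    have step1 : S ≤ ε * Qdeg + (1 / (2 * ε) - ε / 2) * M := by
      have : S ≤ ∑ p ∈ P, (ε / 2 * (‖f p.1‖ ^ 2 + ‖f p.2‖ ^ 2)
          + (1 / (2 * ε) - ε / 2) * min (‖f p.1‖ ^ 2) (‖f p.2‖ ^ 2)) :=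
        Finset.sum_le_sum fun p _ => key _ _ (norm_nonneg _) (norm_nonneg _)
      calc S ≤ _ := this
        _ = ε / 2 * (∑ p ∈ P, (‖f p.1‖ ^ 2 + ‖f p.2‖ ^ 2))
              + (1 / (2 * ε) - ε / 2) * M := by
            rw [Finset.sum_add_distrib, ← Finset.mul_sum, ← Finset.mul_sum, ← hMdef]
        _ = ε * Qdeg + (1 / (2 * ε) - ε / 2) * M := by
            rw [Finset.sum_add_distrib, hfst, hsnd]
            ring
    have hcnn : 0 ≤ 1 / (2 * ε) - ε / 2 := by
      rw [sub_nonneg]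
      rw [div_le_div_iff₀ (by norm_num) (by linarith)]
      nlinarith
    calc S ≤ ε * Qdeg + (1 / (2 * ε) - ε / 2) * M := step1
      _ ≤ ε * Qdeg + (1 / (2 * ε) - ε / 2) * (k * N) := by
          have := mul_le_mul_of_nonneg_left hMkN hcnn
          linarith
  -- nonnegativity of k
  have hknn : 0 ≤ k := by
    have h0 := hsparse {Classical.arbitrary V}
    have : edgesTwice G {Classical.arbitrary V} = 0 := by
      rw [edgesTwice, Finset.card_eq_zero, Finset.filter_eq_empty_iff]
      rintro ⟨x, y⟩ hp
      rw [Finset.mem_product, Finset.mem_singleton, Finset.mem_singleton] at hp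
      obtain ⟨rfl, rfl⟩ := hp
      exact G.loopless.irrefl _
    rw [this] at h0
    simpa using h0
  by_cases hk0 : k = 0
  · subst hk0
    have hM0 : M = 0 := le_antisymm (by simpa using hMkN) hMnn
    have hterm : ∀ p ∈ P, min (‖f p.1‖ ^ 2) (‖f p.2‖ ^ 2) = 0 := by
      intro p hp
      exact (Finset.sum_eq_zero_iff_of_nonneg
        (fun p _ => le_min (by positivity) (by positivity))).1 hM0 p hp
    have hS0 : S = 0 := by
      refine Finset.sum_eq_zero fun p hp => ?_
      have h := hterm p hp
      rcases le_total (‖f p.1‖) (‖f p.2‖) with hab | hab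
      · have h1 : ‖f p.1‖ ^ 2 = 0 := by
          rw [min_eq_left (by nlinarith [norm_nonneg (f p.1), norm_nonneg (f p.2)])] at h
          exact h
        have : ‖f p.1‖ = 0 := by nlinarith [norm_nonneg (f p.1)]
        rw [this, zero_mul]
      · have h1 : ‖f p.2‖ ^ 2 = 0 := by
          rw [min_eq_right (by nlinarith [norm_nonneg (f p.1), norm_nonneg (f p.2)])] at h
          exact h
        have : ‖f p.2‖ = 0 := by nlinarith [norm_nonneg (f p.2)]
        rw [this, mul_zero]
    have hB0 : B = 0 := by
      rw [hS0] at hBS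
      exact abs_eq_zero.1 (le_antisymm hBS (abs_nonneg _))
    rw [hB0]
    norm_num [Real.sqrt_zero]
    exact ⟨hQD_lb, hQD_ub⟩
  · have hk : 0 < k := lt_of_le_of_ne hknn (Ne.symm hk0)
    have hk2 : 0 < k / 2 := by linarith
    have hdk : 0 < d - k / 2 := by linarith
    have hDk : 0 < D - k / 2 := by linarith
    constructor
    · -- lower bound
      set s := Real.sqrt (k / 2) with hsdef
      set t := Real.sqrt (d - k / 2) with htdef
      have hs : 0 < s := Real.sqrt_pos.2 hk2
      have ht : 0 < t := Real.sqrt_pos.2 hdk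
      have hs2 : s ^ 2 = k / 2 := Real.sq_sqrt hk2.le
      have ht2 : t ^ 2 = d - k / 2 := Real.sq_sqrt hdk.le
      have hst : Real.sqrt (k / 2 * (d - k / 2)) = s * t := Real.sqrt_mul hk2.le _
      set ε := s / t with hεdef
      have hε : 0 < ε := div_pos hs ht
      have hε1 : ε ≤ 1 := by
        rw [hεdef, div_le_one ht]
        exact Real.sqrt_le_sqrt (by linarith)
      have hSb := hSbound ε hε hε1
      have hBub : B ≤ S := (abs_le.1 hBS).2
      have h1 : (1 - ε) * (d * N) ≤ (1 - ε) * QD :=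
        mul_le_mul_of_nonneg_left hQD_lb (by linarith)
      have h2 : ε * Qdeg ≤ ε * QD := mul_le_mul_of_nonneg_left hQdeg_le hε.le
      have e1 : ε * (d - k / 2) = s * t := by
        rw [← ht2, hεdef]
        field_simp
      have e2 : (1 / (2 * ε)) * k = s * t := by
        have hk2s : k = 2 * s ^ 2 := by rw [hs2]; ring
        rw [hεdef, hk2s]
        field_simp
      have hcoef : ((1 - ε) * d - (1 / (2 * ε) - ε / 2) * k) * N = (d - 2 * (s * t)) * N := by
        have : (1 - ε) * d - (1 / (2 * ε) - ε / 2) * k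
            = d - ε * (d - k / 2) - (1 / (2 * ε)) * k := by ring
        rw [this, e1, e2]
        ring
      rw [hst]
      have key1 : ((1 - ε) * d - (1 / (2 * ε) - ε / 2) * k) * N ≤ QD - B := by
        have expand : ((1 - ε) * d - (1 / (2 * ε) - ε / 2) * k) * N
            = (1 - ε) * (d * N) - (1 / (2 * ε) - ε / 2) * (k * N) := by ring
        rw [expand]
        linarith [hSb, hBub, h1, h2]
      calc (d - 2 * (s * t)) * N = ((1 - ε) * d - (1 / (2 * ε) - ε / 2) * k) * N := hcoef.symm
        _ ≤ QD - B := key1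
    · -- upper bound
      set s := Real.sqrt (k / 2) with hsdef
      set t := Real.sqrt (D - k / 2) with htdef
      have hs : 0 < s := Real.sqrt_pos.2 hk2
      have ht : 0 < t := Real.sqrt_pos.2 hDk
      have hs2 : s ^ 2 = k / 2 := Real.sq_sqrt hk2.le
      have ht2 : t ^ 2 = D - k / 2 := Real.sq_sqrt hDk.le
      have hst : Real.sqrt (k / 2 * (D - k / 2)) = s * t := Real.sqrt_mul hk2.le _
      set ε := s / t with hεdef
      have hε : 0 < ε := div_pos hs ht
      have hε1 : ε ≤ 1 := by
        rw [hεdef, div_le_one ht]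
        exact Real.sqrt_le_sqrt (by linarith)
      have hSb := hSbound ε hε hε1
      have hBlb : -S ≤ B := (abs_le.1 hBS).1
      have h2 : ε * Qdeg ≤ ε * (D * N) :=
        mul_le_mul_of_nonneg_left (le_trans hQdeg_le hQD_ub) hε.le
      have e1 : ε * (D - k / 2) = s * t := by
        rw [← ht2, hεdef]
        field_simp
      have e2 : (1 / (2 * ε)) * k = s * t := by
        have hk2s : k = 2 * s ^ 2 := by rw [hs2]; ring
        rw [hεdef, hk2s]
        field_simp
      have hcoef : ((1 + ε) * D + (1 / (2 * ε) - ε / 2) * k) * N = (D + 2 * (s * t)) * N := by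
        have : (1 + ε) * D + (1 / (2 * ε) - ε / 2) * k
            = D + ε * (D - k / 2) + (1 / (2 * ε)) * k := by ring
        rw [this, e1, e2]
        ring
      rw [hst]
      have key1 : QD - B ≤ ((1 + ε) * D + (1 / (2 * ε) - ε / 2) * k) * N := by
        have expand : ((1 + ε) * D + (1 / (2 * ε) - ε / 2) * k) * N
            = D * N + ε * (D * N) + (1 / (2 * ε) - ε / 2) * (k * N) := by ring
        rw [expand]
        linarith [hSb, hBlb, h2, hQD_ub]
      calc QD - B ≤ ((1 + ε) * D + (1 / (2 * ε) - ε / 2) * k) * N := key1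
        _ = (D + 2 * (s * t)) * N := hcoef

end
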